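/- Let a functional φ ∈ Φ be ci-differentiable at every point (τ,z,w(·)) ∈ G with τ < ϑ, satisfy the Hamilton–Jacobi equation ∂^{ci}_{τ,w} φ(τ,z,w(·)) + H(τ,z,w(·), ∇_z φ(τ,z,w(·))) = 0 at all these points, and satisfy the terminal condition φ(ϑ,z,w(·)) = σ(z,w(·)). Then φ is a viscosity solution of the Cauchy problem. -/

import Mathlib

noncomputable section

open MeasureTheory Set Filter Topology Asymptotics RealInnerProductSpace
open scoped NNReal

namespace DGPaper

abbrev E (n : ℕ) : Type := EuclideanSpace ℝ (Fin n)

variable {n l m : ℕ}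

/-- `x` is piecewise continuous on `[a,b)` (equivalently `[a,b]`, the value at `b` being free):
there is a finite partition `a = ξ₀ < ξ₁ < … = b` such that `x` is continuous on each
`[ξ i, ξ (i+1))` and has a finite left limit at each `ξ (i+1)`. -/
def PCOn (x : ℝ → E n) (a b : ℝ) : Prop :=
  ∃ k : ℕ, ∃ ξ : Fin (k + 2) → ℝ, StrictMono ξ ∧ ξ 0 = a ∧ ξ (Fin.last (k + 1)) = b ∧
    ∀ i : Fin (k + 1), ContinuousOn x (Ico (ξ i.castSucc) (ξ i.succ)) ∧
      ∃ L : E n, Tendsto x (𝓝[<] ξ i.succ) (𝓝 L)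

/-- membership in the space `PC = PC([-h,0), ℝⁿ)`. -/
def PCh (h : ℝ) (w : ℝ → E n) : Prop := PCOn w (-h) 0

/-- `‖w‖₁ = ∫_{-h}^0 ‖w ξ‖ dξ`. -/
def norm1 (h : ℝ) (w : ℝ → E n) : ℝ := ∫ ξ in (-h)..(0:ℝ), ‖w ξ‖

/-- `‖w‖_∞ = sup_{ξ ∈ [-h,0)} ‖w ξ‖`. -/
def normInf (h : ℝ) (w : ℝ → E n) : ℝ := sSup ((fun ξ => ‖w ξ‖) '' Ico (-h) (0 : ℝ))

/-- `(z, w) ∈ P(α)`. -/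
def memP (h α : ℝ) (z : E n) (w : ℝ → E n) : Prop := PCh h w ∧ ‖z‖ ≤ α ∧ normInf h w ≤ α

/-- the history segment `x_t(ξ) = x (t + ξ)`. -/
def seg (x : ℝ → E n) (t : ℝ) : ℝ → E n := fun ξ => x (t + ξ)

/-- the constant right extension `κ(·)` of `(τ, z, w)`, i.e. the unique element of
`Λ₀(τ,z,w(·))`. -/
def ext0 (τ : ℝ) (z : E n) (w : ℝ → E n) : ℝ → E n := fun t => if t < τ then w (t - τ) else z

/-- the set `Λ(τ,z,w(·))` of Lipschitz right extensions. -/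
def Lam (ϑ h τ : ℝ) (z : E n) (w : ℝ → E n) : Set (ℝ → E n) :=
  {x | PCOn x (τ - h) ϑ ∧ x τ = z ∧ (∀ t ∈ Ico (τ - h) τ, x t = w (t - τ)) ∧
    ∃ K : ℝ≥0, LipschitzOnWith K x (Icc τ ϑ)}

/-- membership in the class `Φ`. -/
def InPhi (t0 ϑ h : ℝ) (φ : ℝ → E n → (ℝ → E n) → ℝ) : Prop :=
  (∀ (z : E n) (w : ℝ → E n), PCh h w → ContinuousOn (fun τ => φ τ z w) (Icc t0 ϑ)) ∧
  ∀ α > (0 : ℝ), ∃ lφ > (0 : ℝ), ∀ τ ∈ Icc t0 ϑ, ∀ (z z' : E n) (w w' : ℝ → E n),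
    memP h α z w → memP h α z' w' →
    |φ τ z w - φ τ z' w'| ≤ lφ * (‖z - z'‖ + norm1 h (fun ξ => w ξ - w' ξ))

/-- condition (C1). -/
def CondC1 (t0 ϑ h : ℝ) (f : ℝ → E n → (ℝ → E n) → E l → E m → E n)
    (f0 : ℝ → E n → (ℝ → E n) → E l → E m → ℝ) : Prop :=
  ∀ (x : E n) (r : ℝ → E n), PCh h r →
    ContinuousOn (fun p : ℝ × E l × E m => f p.1 x r p.2.1 p.2.2)
      (Icc t0 ϑ ×ˢ (univ : Set (E l × E m))) ∧
    ContinuousOn (fun p : ℝ × E l × E m => f0 p.1 x r p.2.1 p.2.2)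
      (Icc t0 ϑ ×ˢ (univ : Set (E l × E m)))

/-- condition (C2). -/
def CondC2 (t0 ϑ h : ℝ) (U : Set (E l)) (V : Set (E m))
    (f : ℝ → E n → (ℝ → E n) → E l → E m → E n)
    (f0 : ℝ → E n → (ℝ → E n) → E l → E m → ℝ) : Prop :=
  ∃ cf > (0 : ℝ), ∀ t ∈ Icc t0 ϑ, ∀ (x : E n) (r : ℝ → E n), PCh h r →
    ∀ u ∈ U, ∀ v ∈ V,
      ‖f t x r u v‖ + |f0 t x r u v| ≤ cf * (1 + ‖x‖ + norm1 h r + ‖r (-h)‖)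

/-- condition (C3). -/
def CondC3 (t0 ϑ h : ℝ) (U : Set (E l)) (V : Set (E m))
    (f : ℝ → E n → (ℝ → E n) → E l → E m → E n)
    (f0 : ℝ → E n → (ℝ → E n) → E l → E m → ℝ) : Prop :=
  ∀ α > (0 : ℝ), ∃ lf > (0 : ℝ), ∀ t ∈ Icc t0 ϑ, ∀ (x x' : E n) (r r' : ℝ → E n),
    memP h α x r → memP h α x' r' → ∀ u ∈ U, ∀ v ∈ V,
      ‖f t x r u v - f t x' r' u v‖ + |f0 t x r u v - f0 t x' r' u v| ≤
        lf * (‖x - x'‖ + norm1 h (fun ξ => r ξ - r' ξ) + ‖r (-h) - r' (-h)‖)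

/-- the Hamiltonian `H`. -/
def Ham (U : Set (E l)) (V : Set (E m))
    (f : ℝ → E n → (ℝ → E n) → E l → E m → E n)
    (f0 : ℝ → E n → (ℝ → E n) → E l → E m → ℝ)
    (τ : ℝ) (z : E n) (w : ℝ → E n) (s : E n) : ℝ :=
  ⨅ u : U, ⨆ v : V, (⟪f τ z w u v, s⟫ + f0 τ z w u v)

/-- condition (C4), Isaacs' condition. -/
def CondC4 (t0 ϑ h : ℝ) (U : Set (E l)) (V : Set (E m))
    (f : ℝ → E n → (ℝ → E n) → E l → E m → E n)
    (f0 : ℝ → E n → (ℝ → E n) → E l → E m → ℝ) : Prop :=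
  ∀ t ∈ Icc t0 ϑ, ∀ (x : E n) (r : ℝ → E n), PCh h r → ∀ s : E n,
    (⨅ u : U, ⨆ v : V, (⟪f t x r u v, s⟫ + f0 t x r u v)) =
    (⨆ v : V, ⨅ u : U, (⟪f t x r u v, s⟫ + f0 t x r u v))

/-- condition (C5). -/
def CondC5 (h : ℝ) (σ : E n → (ℝ → E n) → ℝ) : Prop :=
  ∀ α > (0 : ℝ), ∃ ls > (0 : ℝ), ∀ (x x' : E n) (r r' : ℝ → E n),
    memP h α x r → memP h α x' r' →
    |σ x r - σ x' r'| ≤ ls * (‖x - x'‖ + norm1 h (fun ξ => r ξ - r' ξ))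

/-- the set of admissible control realizations on `[τ, ϑ]` with values in `U`. -/
def Ctrl (ϑ τ : ℝ) {d : ℕ} (U : Set (E d)) : Set (ℝ → E d) :=
  {u | Measurable u ∧ ∀ t ∈ Icc τ ϑ, u t ∈ U}

/-- `x(·)` is the motion of the delay system generated from the initial position `(τ,z,w(·))`
by the control realizations `u(·)`, `v(·)`. -/
def IsMotion (ϑ h : ℝ) (f : ℝ → E n → (ℝ → E n) → E l → E m → E n)
    (τ : ℝ) (z : E n) (w : ℝ → E n) (u : ℝ → E l) (v : ℝ → E m) (x : ℝ → E n) : Prop :=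
  x τ = z ∧ (∀ t ∈ Ico (τ - h) τ, x t = w (t - τ)) ∧ PCOn x (τ - h) ϑ ∧
  (∃ K : ℝ≥0, LipschitzOnWith K x (Icc τ ϑ)) ∧
  ∀ᵐ t ∂(volume : Measure ℝ), t ∈ Icc τ ϑ → HasDerivAt x (f t (x t) (seg x t) (u t) (v t)) t

/-- `X` assigns to initial data and controls the unique generated motion. -/
def MotionMap (t0 ϑ h : ℝ) (U : Set (E l)) (V : Set (E m))
    (f : ℝ → E n → (ℝ → E n) → E l → E m → E n)
    (X : ℝ → E n → (ℝ → E n) → (ℝ → E l) → (ℝ → E m) → ℝ → E n) : Prop :=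
  ∀ τ ∈ Icc t0 ϑ, ∀ (z : E n) (w : ℝ → E n), PCh h w →
    ∀ u ∈ Ctrl ϑ τ U, ∀ v ∈ Ctrl ϑ τ V,
      IsMotion ϑ h f τ z w u v (X τ z w u v) ∧
      ∀ x' : ℝ → E n, IsMotion ϑ h f τ z w u v x' → EqOn x' (X τ z w u v) (Icc (τ - h) ϑ)

/-- the quality index `γ` along a motion. -/
def cost (ϑ : ℝ) (f0 : ℝ → E n → (ℝ → E n) → E l → E m → ℝ) (σ : E n → (ℝ → E n) → ℝ)
    (τ : ℝ) (x : ℝ → E n) (u : ℝ → E l) (v : ℝ → E m) : ℝ :=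
  σ (x ϑ) (seg x ϑ) + ∫ t in τ..ϑ, f0 t (x t) (seg x t) (u t) (v t)

/-- non-anticipative strategy of the first player. -/
def Nonant1 (ϑ τ : ℝ) (U : Set (E l)) (V : Set (E m)) (Q : (ℝ → E m) → ℝ → E l) : Prop :=
  (∀ v ∈ Ctrl ϑ τ V, Q v ∈ Ctrl ϑ τ U) ∧
  ∀ v ∈ Ctrl ϑ τ V, ∀ v' ∈ Ctrl ϑ τ V, ∀ t ∈ Icc τ ϑ,
    (∀ᵐ ξ ∂(volume : Measure ℝ), ξ ∈ Icc τ t → v ξ = v' ξ) →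
    (∀ᵐ ξ ∂(volume : Measure ℝ), ξ ∈ Icc τ t → Q v ξ = Q v' ξ)

/-- non-anticipative strategy of the second player. -/
def Nonant2 (ϑ τ : ℝ) (U : Set (E l)) (V : Set (E m)) (Q : (ℝ → E l) → ℝ → E m) : Prop :=
  (∀ u ∈ Ctrl ϑ τ U, Q u ∈ Ctrl ϑ τ V) ∧
  ∀ u ∈ Ctrl ϑ τ U, ∀ u' ∈ Ctrl ϑ τ U, ∀ t ∈ Icc τ ϑ,
    (∀ᵐ ξ ∂(volume : Measure ℝ), ξ ∈ Icc τ t → u ξ = u' ξ) →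
    (∀ᵐ ξ ∂(volume : Measure ℝ), ξ ∈ Icc τ t → Q u ξ = Q u' ξ)

/-- the lower value functional `ρᵘ`. -/
def rhoU (ϑ : ℝ) (U : Set (E l)) (V : Set (E m))
    (f0 : ℝ → E n → (ℝ → E n) → E l → E m → ℝ) (σ : E n → (ℝ → E n) → ℝ)
    (X : ℝ → E n → (ℝ → E n) → (ℝ → E l) → (ℝ → E m) → ℝ → E n)
    (τ : ℝ) (z : E n) (w : ℝ → E n) : ℝ :=
  ⨅ Q : {Q : (ℝ → E m) → ℝ → E l // Nonant1 ϑ τ U V Q},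
    ⨆ v : Ctrl ϑ τ V, cost ϑ f0 σ τ (X τ z w (Q.1 v.1) v.1) (Q.1 v.1) v.1

/-- the upper value functional `ρᵛ`. -/
def rhoV (ϑ : ℝ) (U : Set (E l)) (V : Set (E m))
    (f0 : ℝ → E n → (ℝ → E n) → E l → E m → ℝ) (σ : E n → (ℝ → E n) → ℝ)
    (X : ℝ → E n → (ℝ → E n) → (ℝ → E l) → (ℝ → E m) → ℝ → E n)
    (τ : ℝ) (z : E n) (w : ℝ → E n) : ℝ :=
  ⨆ Q : {Q : (ℝ → E l) → ℝ → E m // Nonant2 ϑ τ U V Q},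
    ⨅ u : Ctrl ϑ τ U, cost ϑ f0 σ τ (X τ z w u.1 (Q.1 u.1)) u.1 (Q.1 u.1)

/-- the neighborhood `O⁺_δ(τ,z)`. -/
def Oplus (δ τ : ℝ) (z : E n) : Set (ℝ × E n) := {p | p.1 ∈ Icc τ (τ + δ) ∧ ‖p.2 - z‖ ≤ δ}

/-- the terminal condition `φ(ϑ,z,w(·)) = σ(z,w(·))`. -/
def TerminalCond (ϑ h : ℝ) (σ : E n → (ℝ → E n) → ℝ) (φ : ℝ → E n → (ℝ → E n) → ℝ) : Prop :=
  ∀ (z : E n) (w : ℝ → E n), PCh h w → φ ϑ z w = σ z w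

/-- `φ ∈ Φ` is a viscosity solution of the Cauchy problem. -/
def IsViscositySol (t0 ϑ h : ℝ) (U : Set (E l)) (V : Set (E m))
    (f : ℝ → E n → (ℝ → E n) → E l → E m → E n)
    (f0 : ℝ → E n → (ℝ → E n) → E l → E m → ℝ) (σ : E n → (ℝ → E n) → ℝ)
    (φ : ℝ → E n → (ℝ → E n) → ℝ) : Prop :=
  InPhi t0 ϑ h φ ∧ TerminalCond ϑ h σ φ ∧
  (∀ τ ∈ Ico t0 ϑ, ∀ (z : E n) (w : ℝ → E n), PCh h w →
    ∀ ψ : ℝ × E n → ℝ, ContDiff ℝ 1 ψ → ∀ δ > (0 : ℝ),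
      (∀ p ∈ Oplus δ τ z, φ τ z w - ψ (τ, z) ≤ φ p.1 p.2 (seg (ext0 τ z w) p.1) - ψ p) →
      deriv (fun t => ψ (t, z)) τ +
        Ham U V f f0 τ z w (gradient (fun x => ψ (τ, x)) z) ≤ 0) ∧
  (∀ τ ∈ Ico t0 ϑ, ∀ (z : E n) (w : ℝ → E n), PCh h w →
    ∀ ψ : ℝ × E n → ℝ, ContDiff ℝ 1 ψ → ∀ δ > (0 : ℝ),
      (∀ p ∈ Oplus δ τ z, φ p.1 p.2 (seg (ext0 τ z w) p.1) - ψ p ≤ φ τ z w - ψ (τ, z)) →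
      0 ≤ deriv (fun t => ψ (t, z)) τ +
        Ham U V f f0 τ z w (gradient (fun x => ψ (τ, x)) z))

/-- `φ` has ci-derivatives `(c, g)` at `(τ,z,w(·))`. -/
def HasCiDerivAt (ϑ h : ℝ) (φ : ℝ → E n → (ℝ → E n) → ℝ) (c : ℝ) (g : E n)
    (τ : ℝ) (z : E n) (w : ℝ → E n) : Prop :=
  ∀ y ∈ Lam ϑ h τ z w,
    (fun p : ℝ × E n => φ p.1 p.2 (seg y p.1) - φ τ z w - (p.1 - τ) * c - ⟪p.2 - z, g⟫)
      =o[𝓝[Icc τ ϑ ×ˢ (univ : Set (E n))] ((τ, z) : ℝ × E n)]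
        fun p : ℝ × E n => |p.1 - τ| + ‖p.2 - z‖

/-- the subdifferential `D⁻φ(τ,z,w(·))`. -/
def Dminus (φ : ℝ → E n → (ℝ → E n) → ℝ) (τ : ℝ) (z : E n) (w : ℝ → E n) : Set (ℝ × E n) :=
  {p | ∀ ε > (0 : ℝ), ∃ δ > (0 : ℝ), ∀ q ∈ Oplus δ τ z, q ≠ ((τ, z) : ℝ × E n) →
    -ε ≤ (φ q.1 q.2 (seg (ext0 τ z w) q.1) - φ τ z w - (q.1 - τ) * p.1 - ⟪q.2 - z, p.2⟫) /
      (|q.1 - τ| + ‖q.2 - z‖)}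

/-- the superdifferential `D⁺φ(τ,z,w(·))`. -/
def Dplus (φ : ℝ → E n → (ℝ → E n) → ℝ) (τ : ℝ) (z : E n) (w : ℝ → E n) : Set (ℝ × E n) :=
  {q | ∀ ε > (0 : ℝ), ∃ δ > (0 : ℝ), ∀ p ∈ Oplus δ τ z, p ≠ ((τ, z) : ℝ × E n) →
    (φ p.1 p.2 (seg (ext0 τ z w) p.1) - φ τ z w - (p.1 - τ) * q.1 - ⟪p.2 - z, q.2⟫) /
      (|p.1 - τ| + ‖p.2 - z‖) ≤ ε}

/-- the lower right directional derivative `∂⁻_{(l0,l)} φ(τ,z,w(·))`. -/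
def lowerDirDeriv (φ : ℝ → E n → (ℝ → E n) → ℝ) (τ : ℝ) (z : E n) (w : ℝ → E n)
    (l0 : ℝ) (lv : E n) : ℝ :=
  Filter.liminf
    (fun p : ℝ × (ℝ × E n) =>
      (φ (τ + p.2.1 * p.1) (z + p.1 • p.2.2) (seg (ext0 τ z w) (τ + p.2.1 * p.1)) - φ τ z w) / p.1)
    ((𝓝[>] (0 : ℝ)) ×ˢ 𝓝[Ici (0 : ℝ) ×ˢ (univ : Set (E n))] ((l0, lv) : ℝ × E n))

/-- the upper right directional derivative `∂⁺_{(l0,l)} φ(τ,z,w(·))`. -/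
def upperDirDeriv (φ : ℝ → E n → (ℝ → E n) → ℝ) (τ : ℝ) (z : E n) (w : ℝ → E n)
    (l0 : ℝ) (lv : E n) : ℝ :=
  Filter.limsup
    (fun p : ℝ × (ℝ × E n) =>
      (φ (τ + p.2.1 * p.1) (z + p.1 • p.2.2) (seg (ext0 τ z w) (τ + p.2.1 * p.1)) - φ τ z w) / p.1)
    ((𝓝[>] (0 : ℝ)) ×ˢ 𝓝[Ici (0 : ℝ) ×ˢ (univ : Set (E n))] ((l0, lv) : ℝ × E n))

/-- the stability (u- and v-stability) property of a functional. -/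
def IsStable (t0 ϑ h : ℝ) (U : Set (E l)) (V : Set (E m))
    (f0 : ℝ → E n → (ℝ → E n) → E l → E m → ℝ)
    (X : ℝ → E n → (ℝ → E n) → (ℝ → E l) → (ℝ → E m) → ℝ → E n)
    (φ : ℝ → E n → (ℝ → E n) → ℝ) : Prop :=
  ∀ τ ∈ Icc t0 ϑ, ∀ (z : E n) (w : ℝ → E n), PCh h w → ∀ t ∈ Icc τ ϑ,
    (⨆ v : Ctrl ϑ τ V, ⨅ u : Ctrl ϑ τ U,
        (φ t (X τ z w u.1 v.1 t) (seg (X τ z w u.1 v.1) t) +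
          ∫ ξ in τ..t, f0 ξ (X τ z w u.1 v.1 ξ) (seg (X τ z w u.1 v.1) ξ) (u.1 ξ) (v.1 ξ)))
      ≤ φ τ z w ∧
    φ τ z w ≤
      ⨅ u : Ctrl ϑ τ U, ⨆ v : Ctrl ϑ τ V,
        (φ t (X τ z w u.1 v.1 t) (seg (X τ z w u.1 v.1) t) +
          ∫ ξ in τ..t, f0 ξ (X τ z w u.1 v.1 ξ) (seg (X τ z w u.1 v.1) ξ) (u.1 ξ) (v.1 ξ))


private lemma inner_nonneg_all {n : ℕ} {v : E n} (hv : ∀ u : E n, (0:ℝ) ≤ ⟪u, v⟫) :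
    v = 0 := by
  have h1 := hv v
  have h2 := hv (-v)
  rw [inner_neg_left] at h2
  exact inner_self_eq_zero.mp (le_antisymm (by linarith) h1)

private lemma key_limit {n : ℕ} (τ ϑ : ℝ) (hτϑ : τ < ϑ) (z : E n) (c a : ℝ) (g b : E n)
    (F : ℝ × E n → ℝ)
    (hF : F =o[𝓝[Icc τ ϑ ×ˢ (univ : Set (E n))] ((τ, z) : ℝ × E n)]
      fun p : ℝ × E n => |p.1 - τ| + ‖p.2 - z‖)
    (hineq : ∀ᶠ p in 𝓝[Icc τ ϑ ×ˢ (univ : Set (E n))] ((τ, z) : ℝ × E n),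
      0 ≤ (p.1 - τ) * (c - a) + ⟪p.2 - z, g - b⟫ + F p) :
    a ≤ c ∧ b = g := by
  set L := 𝓝[Icc τ ϑ ×ˢ (univ : Set (E n))] ((τ, z) : ℝ × E n) with hL
  constructor
  · -- time direction
    haveI : (𝓝[Ioo τ ϑ] τ).NeBot := left_nhdsWithin_Ioo_neBot hτϑ
    set γ : ℝ → ℝ × E n := fun t => (t, z) with hγdef
    have hγ : Tendsto γ (𝓝[Ioo τ ϑ] τ) L := by
      rw [hL, tendsto_nhdsWithin_iff]
      constructor
      · exact ((continuous_id.prodMk continuous_const).tendsto τ).mono_left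
          nhdsWithin_le_nhds
      · filter_upwards [eventually_mem_nhdsWithin] with t ht
        exact ⟨⟨le_of_lt ht.1, le_of_lt ht.2⟩, mem_univ _⟩
    have hFγ : (F ∘ γ) =o[𝓝[Ioo τ ϑ] τ] fun t => t - τ := by
      have h1 := hF.comp_tendsto hγ
      have h2 : ((fun p : ℝ × E n => |p.1 - τ| + ‖p.2 - z‖) ∘ γ)
          =ᶠ[𝓝[Ioo τ ϑ] τ] fun t => t - τ := by
        filter_upwards [eventually_mem_nhdsWithin] with t ht
        simp [hγdef, Function.comp, abs_of_pos (sub_pos.mpr ht.1)]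
      exact h1.congr' EventuallyEq.rfl h2
    have htend : Tendsto (fun t => F (γ t) / (t - τ)) (𝓝[Ioo τ ϑ] τ) (𝓝 0) :=
      hFγ.tendsto_div_nhds_zero
    have hle : ∀ᶠ t in 𝓝[Ioo τ ϑ] τ, a - c ≤ F (γ t) / (t - τ) := by
      filter_upwards [hγ.eventually hineq, eventually_mem_nhdsWithin] with t h1 h2
      have hpos : 0 < t - τ := sub_pos.mpr h2.1
      have h1' : 0 ≤ (t - τ) * (c - a) + F (γ t) := by
        simpa [hγdef] using h1
      rw [le_div_iff₀ hpos]
      nlinarith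
    have := ge_of_tendsto htend hle
    linarith
  · -- space direction
    have hinner : ∀ u : E n, (0:ℝ) ≤ ⟪u, g - b⟫ := by
      intro u
      haveI : (𝓝[>] (0:ℝ)).NeBot := nhdsGT_neBot (0:ℝ)
      set γ : ℝ → ℝ × E n := fun ε => (τ, z + ε • u) with hγdef
      have hγ : Tendsto γ (𝓝[>] (0:ℝ)) L := by
        rw [hL, tendsto_nhdsWithin_iff]
        constructor
        · have hcont : Continuous γ := by
            exact continuous_const.prodMk (continuous_const.add
              (continuous_id.smul continuous_const))
          have := (hcont.tendsto 0).mono_left (nhdsWithin_le_nhds (s := Ioi (0:ℝ)))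
          simpa [hγdef] using this
        · filter_upwards with ε
          exact ⟨⟨le_refl τ, le_of_lt hτϑ⟩, mem_univ _⟩
      have hFγ : (F ∘ γ) =o[𝓝[>] (0:ℝ)] fun ε => ε := by
        have h1 := hF.comp_tendsto hγ
        have h2 : ((fun p : ℝ × E n => |p.1 - τ| + ‖p.2 - z‖) ∘ γ)
            =O[𝓝[>] (0:ℝ)] fun ε => ε := by
          apply IsBigO.of_bound ‖u‖
          filter_upwards [eventually_mem_nhdsWithin] with ε hε
          have : (0:ℝ) < ε := hε
          simp only [hγdef, Function.comp, sub_self, abs_zero, zero_add,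
            add_sub_cancel_left, norm_smul, Real.norm_eq_abs]
          rw [abs_of_nonneg (by positivity : (0:ℝ) ≤ |ε| * ‖u‖), abs_of_pos this]
          ring_nf
          exact le_refl _
        exact h1.trans_isBigO h2
      have htend : Tendsto (fun ε => -(F (γ ε) / ε)) (𝓝[>] (0:ℝ)) (𝓝 0) := by
        have := hFγ.tendsto_div_nhds_zero
        simpa using this.neg
      have hle : ∀ᶠ ε in 𝓝[>] (0:ℝ), -(F (γ ε) / ε) ≤ ⟪u, g - b⟫ := by
        filter_upwards [hγ.eventually hineq, eventually_mem_nhdsWithin] with ε h1 h2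
        have hpos : (0:ℝ) < ε := h2
        have hzz : z + ε • u - z = ε • u := add_sub_cancel_left z (ε • u)
        rw [hzz, real_inner_smul_left, sub_self, zero_mul, zero_add] at h1
        rw [neg_le, le_div_iff₀ hpos]
        nlinarith
      exact le_of_tendsto htend hle
    exact (sub_eq_zero.mp (inner_nonneg_all hinner)).symm

private lemma ext0_mem_Lam {n : ℕ} (ϑ h τ : ℝ) (hτϑ : τ < ϑ) (z : E n) (w : ℝ → E n)
    (hw : PCh h w) : ext0 τ z w ∈ Lam ϑ h τ z w := by
  obtain ⟨k, ξ, hmono, hξ0, hξlast, hpc⟩ := hw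
  have hle0 : ∀ j : Fin (k + 2), ξ j ≤ 0 := fun j => by
    have := hmono.monotone (Fin.le_last j); rwa [hξlast] at this
  refine ⟨?_, if_neg (lt_irrefl τ), fun t ht => if_pos ht.2, 0, ?_⟩
  · -- PCOn
    refine ⟨k + 1, fun i => if hi : (i : ℕ) < k + 2 then τ + ξ ⟨i, hi⟩ else ϑ,
      ?_, ?_, ?_, ?_⟩
    · rw [Fin.strictMono_iff_lt_succ]
      intro i
      have hci : ((i.castSucc : Fin (k + 3)) : ℕ) = (i : ℕ) := rfl
      have hsi : ((i.succ : Fin (k + 3)) : ℕ) = (i : ℕ) + 1 := rfl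
      simp only [hci, hsi]
      rw [dif_pos i.isLt]
      by_cases hi : (i : ℕ) + 1 < k + 2
      · rw [dif_pos hi]
        exact (add_lt_add_iff_left τ).mpr (hmono (Fin.mk_lt_mk.mpr (Nat.lt_succ_self _)))
      · rw [dif_neg hi]
        have := hle0 ⟨(i : ℕ), i.isLt⟩
        linarith
    · show (if hi : ((0 : Fin (k + 3)) : ℕ) < k + 2
          then τ + ξ ⟨((0 : Fin (k + 3)) : ℕ), hi⟩ else ϑ) = τ - h
      simp only [Fin.val_zero]
      show τ + ξ ⟨0, Nat.zero_lt_succ _⟩ = τ - h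
      have hA : ∀ hp : 0 < k + 2, τ + ξ ⟨0, hp⟩ = τ - h := by
        intro hp
        rw [show (⟨0, hp⟩ : Fin (k + 2)) = 0 from Fin.ext (by simp), hξ0]; ring
      rw [hA]
    · show (if hi : ((Fin.last (k + 2) : Fin (k + 3)) : ℕ) < k + 2
          then τ + ξ ⟨((Fin.last (k + 2) : Fin (k + 3)) : ℕ), hi⟩ else ϑ) = ϑ
      simp only [Fin.val_last]
      rw [dif_neg (lt_irrefl _)]
    · intro i
      have hci : ((i.castSucc : Fin (k + 3)) : ℕ) = (i : ℕ) := rfl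
      have hsi : ((i.succ : Fin (k + 3)) : ℕ) = (i : ℕ) + 1 := rfl
      simp only [hci, hsi]
      rw [dif_pos i.isLt]
      by_cases hi : (i : ℕ) + 1 < k + 2
      · rw [dif_pos hi]
        set j : Fin (k + 1) := ⟨(i : ℕ), by omega⟩ with hj
        have e1 : (⟨(i : ℕ), i.isLt⟩ : Fin (k + 2)) = j.castSucc := rfl
        have e2 : (⟨(i : ℕ) + 1, hi⟩ : Fin (k + 2)) = j.succ := rfl
        rw [e1, e2]
        obtain ⟨hcont, Lw, hLw⟩ := hpc j
        have hsle : ξ j.succ ≤ 0 := hle0 j.succ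
        constructor
        · apply ContinuousOn.congr
            (f := fun t => w (t - τ))
          · apply hcont.comp (continuousOn_id.sub continuousOn_const)
            intro t ht
            exact ⟨by simpa using sub_le_sub_right ht.1 τ |>.trans_eq (by ring),
              by simpa [sub_lt_iff_lt_add'] using ht.2⟩
          · intro t ht
            have htτ : t < τ := lt_of_lt_of_le ht.2 (by linarith)
            simp [ext0, htτ]
        · refine ⟨Lw, ?_⟩
          have hmap : Tendsto (fun t => t - τ) (𝓝[<] (τ + ξ j.succ))
              (𝓝[<] (ξ j.succ)) := by
            rw [tendsto_nhdsWithin_iff]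
            constructor
            · have : Tendsto (fun t => t - τ) (𝓝 (τ + ξ j.succ))
                  (𝓝 (τ + ξ j.succ - τ)) := (continuous_id.sub continuous_const).tendsto _
              simpa using this.mono_left nhdsWithin_le_nhds
            · filter_upwards [eventually_mem_nhdsWithin] with t ht
              simpa [sub_lt_iff_lt_add'] using ht
          apply (hLw.comp hmap).congr'
          filter_upwards [eventually_mem_nhdsWithin] with t ht
          have htτ : t < τ := lt_of_lt_of_le ht (by linarith)
          simp [ext0, htτ, Function.comp]
      · rw [dif_neg hi]
        have hik : (i : ℕ) = k + 1 := by omega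
        have hA : ∀ hp : (i : ℕ) < k + 2, τ + ξ ⟨(i : ℕ), hp⟩ = τ := by
          intro hp
          have : (⟨(i : ℕ), hp⟩ : Fin (k + 2)) = Fin.last (k + 1) :=
            Fin.ext (by simpa using hik)
          rw [this, hξlast, add_zero]
        rw [hA]
        constructor
        · exact (continuousOn_const (c := z)).congr
            (fun t ht => by simp [ext0, not_lt.mpr ht.1])
        · refine ⟨z, ?_⟩
          apply tendsto_const_nhds.congr'
          filter_upwards [Ioo_mem_nhdsLT_of_mem (⟨hτϑ, le_refl ϑ⟩ : ϑ ∈ Ioc τ ϑ)]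
            with t ht
          simp [ext0, not_lt.mpr (le_of_lt ht.1)]
  · -- Lipschitz with constant 0
    intro s hs t ht
    have : ext0 τ z w s = ext0 τ z w t := by
      simp [ext0, not_lt.mpr hs.1, not_lt.mpr ht.1]
    simp [this]


private lemma psi_decomp {n : ℕ} (τ ϑ : ℝ) (z : E n)
    (ψ : ℝ × E n → ℝ) (hψ : ContDiff ℝ 1 ψ) :
    ∃ R : ℝ × E n → ℝ,
      R =o[𝓝[Icc τ ϑ ×ˢ (univ : Set (E n))] ((τ, z) : ℝ × E n)]
        (fun p : ℝ × E n => |p.1 - τ| + ‖p.2 - z‖) ∧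
      ∀ p : ℝ × E n, ψ p - ψ (τ, z) =
        (p.1 - τ) * deriv (fun t => ψ (t, z)) τ +
        ⟪p.2 - z, gradient (fun x : E n => ψ (τ, x)) z⟫ + R p := by
  set D := fderiv ℝ ψ ((τ, z) : ℝ × E n) with hDdef
  have hdiff : HasFDerivAt ψ D ((τ, z) : ℝ × E n) :=
    (hψ.differentiable one_ne_zero (τ, z)).hasFDerivAt
  have hcurve : HasDerivAt (fun t : ℝ => ((t, z) : ℝ × E n)) ((1 : ℝ), (0 : E n)) τ :=
    (hasDerivAt_id τ).prodMk (hasDerivAt_const τ z)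
  have hderiv : deriv (fun t => ψ (t, z)) τ = D (1, 0) :=
    (hdiff.comp_hasDerivAt τ hcurve).deriv
  set L2 : E n →L[ℝ] ℝ × E n :=
    (0 : E n →L[ℝ] ℝ).prod (ContinuousLinearMap.id ℝ (E n)) with hL2def
  have hxcurve : HasFDerivAt (fun x : E n => ((τ, x) : ℝ × E n)) L2 z :=
    (hasFDerivAt_const τ z).prodMk (hasFDerivAt_id z)
  have hx : HasFDerivAt (fun x : E n => ψ (τ, x)) (D.comp L2) z := hdiff.comp z hxcurve
  have hgrad : gradient (fun x : E n => ψ (τ, x)) z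
      = (InnerProductSpace.toDual ℝ (E n)).symm (D.comp L2) := hx.hasGradientAt.gradient
  have hinner : ∀ v : E n, ⟪gradient (fun x : E n => ψ (τ, x)) z, v⟫ = D (0, v) := by
    intro v
    rw [hgrad, InnerProductSpace.toDual_symm_apply]
    simp [hL2def]
  refine ⟨fun p => ψ p - ψ (τ, z) - D (p - ((τ, z) : ℝ × E n)), ?_, ?_⟩
  · have h1 : (fun p : ℝ × E n => ψ p - ψ (τ, z) - D (p - ((τ, z) : ℝ × E n)))
        =o[𝓝 ((τ, z) : ℝ × E n)] fun p => p - ((τ, z) : ℝ × E n) := hdiff.isLittleO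
    have h2 : (fun p : ℝ × E n => p - ((τ, z) : ℝ × E n))
        =O[𝓝[Icc τ ϑ ×ˢ (univ : Set (E n))] ((τ, z) : ℝ × E n)]
        fun p : ℝ × E n => |p.1 - τ| + ‖p.2 - z‖ := by
      apply IsBigO.of_bound 1
      filter_upwards with p
      have : ‖p - ((τ, z) : ℝ × E n)‖ = max |p.1 - τ| ‖p.2 - z‖ := by
        rw [Prod.norm_def]; rfl
      rw [this]
      have h3 : (0:ℝ) ≤ |p.1 - τ| := abs_nonneg _
      have h4 : (0:ℝ) ≤ ‖p.2 - z‖ := norm_nonneg _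
      rw [one_mul, Real.norm_eq_abs,
        abs_of_nonneg (by linarith : (0:ℝ) ≤ |p.1 - τ| + ‖p.2 - z‖)]
      exact max_le (by linarith) (by linarith)
    exact (h1.mono nhdsWithin_le_nhds).trans_isBigO h2
  · intro p
    have hsplit : D (p - ((τ, z) : ℝ × E n))
        = (p.1 - τ) * D (1, 0) + D (0, p.2 - z) := by
      have e1 : p - ((τ, z) : ℝ × E n)
          = (p.1 - τ) • ((1 : ℝ), (0 : E n)) + ((0 : ℝ), p.2 - z) := by
        apply Prod.ext <;> simp
      rw [e1, D.map_add, D.map_smul, smul_eq_mul]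
    simp only
    rw [hderiv, real_inner_comm, hinner, hsplit]
    ring

theorem ci_smooth_solution_is_viscosity_solution
    (t0 ϑ h : ℝ) (hth : t0 < ϑ) (hh : 0 < h) (n : ℕ) (hn : 0 < n)
    (l m : ℕ) (U : Set (E l)) (V : Set (E m))
    (hUc : IsCompact U) (hVc : IsCompact V) (hUne : U.Nonempty) (hVne : V.Nonempty)
    (f : ℝ → E n → (ℝ → E n) → E l → E m → E n)
    (f0 : ℝ → E n → (ℝ → E n) → E l → E m → ℝ) (σ : E n → (ℝ → E n) → ℝ)
    (hC1 : CondC1 t0 ϑ h f f0) (hC2 : CondC2 t0 ϑ h U V f f0)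
    (hC3 : CondC3 t0 ϑ h U V f f0) (hC4 : CondC4 t0 ϑ h U V f f0) (hC5 : CondC5 h σ)
    (φ : ℝ → E n → (ℝ → E n) → ℝ) (hφ : InPhi t0 ϑ h φ)
    (c : ℝ → E n → (ℝ → E n) → ℝ) (g : ℝ → E n → (ℝ → E n) → E n)
    (hci : ∀ τ ∈ Ico t0 ϑ, ∀ (z : E n) (w : ℝ → E n), PCh h w →
        HasCiDerivAt ϑ h φ (c τ z w) (g τ z w) τ z w)
    (hHJ : ∀ τ ∈ Ico t0 ϑ, ∀ (z : E n) (w : ℝ → E n), PCh h w →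
        c τ z w + Ham U V f f0 τ z w (g τ z w) = 0)
    (hterm : TerminalCond ϑ h σ φ) :
    IsViscositySol t0 ϑ h U V f f0 σ φ := by
  have hIcc : Icc t0 ϑ = Icc t0 ϑ := rfl
  refine ⟨hφ, hterm, ?_, ?_⟩
  · intro τ hτ z w hw ψ hψ δ hδ htest
    have hτϑ : τ < ϑ := hτ.2
    have hlo := hci τ hτ z w hw (ext0 τ z w) (ext0_mem_Lam ϑ h τ hτϑ z w hw)
    obtain ⟨R, hR, hRdec⟩ := psi_decomp τ ϑ z ψ hψ
    have hF : (fun p : ℝ × E n =>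
        (φ p.1 p.2 (seg (ext0 τ z w) p.1) - φ τ z w - (p.1 - τ) * c τ z w
          - ⟪p.2 - z, g τ z w⟫) - R p)
        =o[𝓝[Icc τ ϑ ×ˢ (univ : Set (E n))] ((τ, z) : ℝ × E n)]
        fun p : ℝ × E n => |p.1 - τ| + ‖p.2 - z‖ := hlo.sub hR
    have hOev : ∀ᶠ p in 𝓝[Icc τ ϑ ×ˢ (univ : Set (E n))] ((τ, z) : ℝ × E n),
        p ∈ Oplus δ τ z := by
      have hball : Metric.ball ((τ, z) : ℝ × E n) δ ∈ 𝓝 ((τ, z) : ℝ × E n) :=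
        Metric.ball_mem_nhds _ hδ
      filter_upwards [mem_nhdsWithin_of_mem_nhds hball, eventually_mem_nhdsWithin]
        with p hp hpS
      have hnorm : ‖p - ((τ, z) : ℝ × E n)‖ < δ := by
        rw [← dist_eq_norm]; exact hp
      have hmax : max |p.1 - τ| ‖p.2 - z‖ < δ := by
        have : ‖p - ((τ, z) : ℝ × E n)‖ = max |p.1 - τ| ‖p.2 - z‖ := by
          rw [Prod.norm_def]; rfl
        rwa [this] at hnorm
      have h1 : |p.1 - τ| < δ := lt_of_le_of_lt (le_max_left _ _) hmax
      have h2 : ‖p.2 - z‖ < δ := lt_of_le_of_lt (le_max_right _ _) hmax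
      exact ⟨⟨hpS.1.1, by have := abs_lt.mp h1; linarith⟩, le_of_lt h2⟩
    have hineq : ∀ᶠ p in 𝓝[Icc τ ϑ ×ˢ (univ : Set (E n))] ((τ, z) : ℝ × E n),
        0 ≤ (p.1 - τ) * (c τ z w - deriv (fun t => ψ (t, z)) τ)
          + ⟪p.2 - z, g τ z w - gradient (fun x : E n => ψ (τ, x)) z⟫
          + ((φ p.1 p.2 (seg (ext0 τ z w) p.1) - φ τ z w - (p.1 - τ) * c τ z w
              - ⟪p.2 - z, g τ z w⟫) - R p) := by
      filter_upwards [hOev] with p hpO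
      have h1 := htest p hpO
      have h2 := hRdec p
      rw [inner_sub_right, mul_sub]
      linarith
    obtain ⟨hac, hbg⟩ := key_limit τ ϑ hτϑ z (c τ z w) (deriv (fun t => ψ (t, z)) τ)
      (g τ z w) (gradient (fun x : E n => ψ (τ, x)) z) _ hF hineq
    have hHJ' := hHJ τ hτ z w hw
    rw [hbg]
    linarith
  · intro τ hτ z w hw ψ hψ δ hδ htest
    have hτϑ : τ < ϑ := hτ.2
    have hlo := hci τ hτ z w hw (ext0 τ z w) (ext0_mem_Lam ϑ h τ hτϑ z w hw)
    obtain ⟨R, hR, hRdec⟩ := psi_decomp τ ϑ z ψ hψ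
    have hF : (fun p : ℝ × E n =>
        R p - (φ p.1 p.2 (seg (ext0 τ z w) p.1) - φ τ z w - (p.1 - τ) * c τ z w
          - ⟪p.2 - z, g τ z w⟫))
        =o[𝓝[Icc τ ϑ ×ˢ (univ : Set (E n))] ((τ, z) : ℝ × E n)]
        fun p : ℝ × E n => |p.1 - τ| + ‖p.2 - z‖ := hR.sub hlo
    have hOev : ∀ᶠ p in 𝓝[Icc τ ϑ ×ˢ (univ : Set (E n))] ((τ, z) : ℝ × E n),
        p ∈ Oplus δ τ z := by
      have hball : Metric.ball ((τ, z) : ℝ × E n) δ ∈ 𝓝 ((τ, z) : ℝ × E n) :=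
        Metric.ball_mem_nhds _ hδ
      filter_upwards [mem_nhdsWithin_of_mem_nhds hball, eventually_mem_nhdsWithin]
        with p hp hpS
      have hnorm : ‖p - ((τ, z) : ℝ × E n)‖ < δ := by
        rw [← dist_eq_norm]; exact hp
      have hmax : max |p.1 - τ| ‖p.2 - z‖ < δ := by
        have : ‖p - ((τ, z) : ℝ × E n)‖ = max |p.1 - τ| ‖p.2 - z‖ := by
          rw [Prod.norm_def]; rfl
        rwa [this] at hnorm
      have h1 : |p.1 - τ| < δ := lt_of_le_of_lt (le_max_left _ _) hmax
      have h2 : ‖p.2 - z‖ < δ := lt_of_le_of_lt (le_max_right _ _) hmax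
      exact ⟨⟨hpS.1.1, by have := abs_lt.mp h1; linarith⟩, le_of_lt h2⟩
    have hineq : ∀ᶠ p in 𝓝[Icc τ ϑ ×ˢ (univ : Set (E n))] ((τ, z) : ℝ × E n),
        0 ≤ (p.1 - τ) * (deriv (fun t => ψ (t, z)) τ - c τ z w)
          + ⟪p.2 - z, gradient (fun x : E n => ψ (τ, x)) z - g τ z w⟫
          + (R p - (φ p.1 p.2 (seg (ext0 τ z w) p.1) - φ τ z w - (p.1 - τ) * c τ z w
              - ⟪p.2 - z, g τ z w⟫)) := by
      filter_upwards [hOev] with p hpO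
      have h1 := htest p hpO
      have h2 := hRdec p
      rw [inner_sub_right, mul_sub]
      linarith
    obtain ⟨hac, hbg⟩ := key_limit τ ϑ hτϑ z (deriv (fun t => ψ (t, z)) τ) (c τ z w)
      (gradient (fun x : E n => ψ (τ, x)) z) (g τ z w) _ hF hineq
    have hHJ' := hHJ τ hτ z w hw
    rw [← hbg]
    linarith

end DGPaper
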